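/- Let f: ℂ → ℂ be entire, let d: ℝ → ℝ be differentiable and η: ℝ → ℝ be any function, and set h := d + η, z_s(x) := x + iη(x), z_b(x) := x − i d(x). Define g₀ := f ∘ z_b and g_{n+1}(x) := g_n'(x)/(1 − id'(x)). Then for every x ∈ ℝ the series Σ_{n≥0} (i h(x))^n g_n(x)/n! converges absolutely and its sum equals f(z_s(x)). -/

import Mathlib

open scoped Nat

/-- The paper's relation `f(z_s) = exp[ih ∂_{z_b}] f(z_b)`: the Taylor series of the
entire complex potential from the bottom `z_b = x − id` up to the free surface
`z_s = x + iη`, with `h = d + η` and `g_{n+1} = g_n'/(1 − id')`. -/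
theorem stmt_11 (f : ℂ → ℂ) (hf : Differentiable ℂ f)
    (d : ℝ → ℝ) (hd : Differentiable ℝ d) (η : ℝ → ℝ)
    (h : ℝ → ℝ) (hdef : ∀ x : ℝ, h x = d x + η x)
    (zs zb : ℝ → ℂ) (hzs : ∀ x : ℝ, zs x = (x : ℂ) + Complex.I * (η x : ℂ))
    (hzb : ∀ x : ℝ, zb x = (x : ℂ) - Complex.I * (d x : ℂ))
    (g : ℕ → ℝ → ℂ) (hg0 : g 0 = f ∘ zb)
    (hgs : ∀ n : ℕ, ∀ x : ℝ, g (n + 1) x = deriv (g n) x / (1 - Complex.I * Complex.ofReal (deriv d x))) :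
    ∀ x : ℝ,
      (Summable fun n : ℕ => ‖(Complex.I * (h x : ℂ)) ^ n * g n x / (n ! : ℂ)‖) ∧
      ∑' n : ℕ, (Complex.I * (h x : ℂ)) ^ n * g n x / (n ! : ℂ) = f (zs x) := by
  have hzbfun : zb = fun x : ℝ => (x : ℂ) - Complex.I * (d x : ℂ) := funext hzb
  have hzb' : ∀ x : ℝ, HasDerivAt zb (1 - Complex.I * (Complex.ofReal (deriv d x))) x := by
    intro x
    have h1 : HasDerivAt (fun x : ℝ => (x : ℂ)) 1 x := Complex.ofRealCLM.hasDerivAt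
    have h2 : HasDerivAt (fun x : ℝ => Complex.I * ((d x : ℂ))) (Complex.I * (Complex.ofReal (deriv d x))) x :=
      ((hd x).hasDerivAt.ofReal_comp).const_mul _
    rw [hzbfun]
    exact h1.sub h2
  have hne : ∀ x : ℝ, (1 - Complex.I * (Complex.ofReal (deriv d x))) ≠ 0 := by
    intro x H
    have := congrArg Complex.re H
    simp at this
  -- differentiability of iterated derivatives
  have hitder : ∀ n : ℕ, Differentiable ℂ (iteratedDeriv n f) := by
    intro n
    exact (hf.contDiff (n := (⊤ : WithTop ℕ∞))).differentiable_iteratedDeriv n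
      (by exact_mod_cast WithTop.coe_lt_top (n : ℕ∞))
  -- key: g n x = iteratedDeriv n f (zb x)
  have key : ∀ n : ℕ, ∀ x : ℝ, g n x = iteratedDeriv n f (zb x) := by
    intro n
    induction n with
    | zero => intro x; simp [hg0, iteratedDeriv_zero]
    | succ n ih =>
      intro x
      have hgn : g n = fun y : ℝ => iteratedDeriv n f (zb y) := funext ih
      have hcomp : HasDerivAt (fun y : ℝ => iteratedDeriv n f (zb y))
          ((1 - Complex.I * (Complex.ofReal (deriv d x))) • deriv (iteratedDeriv n f) (zb x)) x :=
        ((hitder n (zb x)).hasDerivAt).scomp x (hzb' x)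
      rw [hgs n x, hgn, hcomp.deriv, smul_eq_mul, mul_comm, mul_div_assoc,
        div_self (hne x), mul_one, ← iteratedDeriv_succ]
  intro x
  -- the displacement
  have hdisp : zs x - zb x = Complex.I * (h x : ℂ) := by
    rw [hzs x, hzb x, hdef x]
    push_cast
    ring
  set w : ℂ := Complex.I * (h x : ℂ) with hw
  set c : ℂ := zb x with hc
  have hterm : ∀ n : ℕ, (w ^ n * g n x / (n ! : ℂ)) =
      (n ! : ℂ)⁻¹ • (zs x - c) ^ n • iteratedDeriv n f c := by
    intro n
    rw [key n x, hdisp, smul_eq_mul, smul_eq_mul]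
    ring
  have hsum : HasSum (fun n : ℕ => (n ! : ℂ)⁻¹ • (zs x - c) ^ n • iteratedDeriv n f c) (f (zs x)) :=
    Complex.hasSum_taylorSeries_of_entire hf c (zs x)
  -- absolute convergence via the series at 2w
  have hsum2 : HasSum (fun n : ℕ => (n ! : ℂ)⁻¹ • ((c + 2 * w) - c) ^ n • iteratedDeriv n f c)
      (f (c + 2 * w)) := Complex.hasSum_taylorSeries_of_entire hf c (c + 2 * w)
  have hbd : ∃ C : ℝ, ∀ n : ℕ, ‖(n ! : ℂ)⁻¹ • ((2 * w) ^ n) • iteratedDeriv n f c‖ ≤ C := by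
    have ht : Filter.Tendsto (fun n : ℕ => (n ! : ℂ)⁻¹ • ((c + 2 * w) - c) ^ n • iteratedDeriv n f c)
        Filter.atTop (nhds 0) := hsum2.summable.tendsto_atTop_zero
    simp only [add_sub_cancel_left] at ht
    obtain ⟨C, hC⟩ := ht.norm.bddAbove_range
    exact ⟨C, fun n => hC (Set.mem_range_self n)⟩
  obtain ⟨C, hC⟩ := hbd
  have hle : ∀ n : ℕ, ‖w ^ n * g n x / (n ! : ℂ)‖ ≤ C * (1 / 2 : ℝ) ^ n := by
    intro n
    have heq : ‖w ^ n * g n x / (n ! : ℂ)‖ =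
        ‖(n ! : ℂ)⁻¹ • ((2 * w) ^ n) • iteratedDeriv n f c‖ * (1 / 2 : ℝ) ^ n := by
      rw [key n x, ← hc]
      simp [norm_smul, norm_pow, norm_mul, norm_div, mul_pow]
      field_simp
    rw [heq]
    exact mul_le_mul_of_nonneg_right (hC n) (by positivity)
  have hsummable : Summable fun n : ℕ => ‖w ^ n * g n x / (n ! : ℂ)‖ :=
    Summable.of_nonneg_of_le (fun n => norm_nonneg _) hle
      ((summable_geometric_of_lt_one (by norm_num) (by norm_num)).mul_left C)
  refine ⟨hsummable, ?_⟩
  calc ∑' n : ℕ, w ^ n * g n x / (n ! : ℂ)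
      = ∑' n : ℕ, (n ! : ℂ)⁻¹ • (zs x - c) ^ n • iteratedDeriv n f c := by
        exact tsum_congr hterm
    _ = f (zs x) := hsum.tsum_eq
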